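/- Let d ≥ 1, let v_1, …, v_{d+1} ∈ ℤ^d be affinely independent over ℝ, suppose 0 lies in the convex hull of {v_1, …, v_{d+1}} but 0 ∉ {v_1, …, v_{d+1}}, set A := {0, v_1, …, v_{d+1}} (a set of d+2 elements), and assume A generates ℤ^d as an additive group. Then the identity (∑_{h≥0} |hA| · t^h) · (1 − t)^{d+2} = 1 − t^D holds in the formal power series ring ℚ[[t]]. -/

import Mathlib

open Pointwise

/-- The `h`-fold sumset `hA` of a set `A` in an additive commutative monoid:
`0A = {0}` and `(n+1)A = A + nA`. -/
def iterSumset {G : Type*} [AddCommMonoid G] (A : Set G) : ℕ → Set G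
  | 0 => {0}
  | n + 1 => A + iterSumset A n

/-- The lift of `v ∈ ℤ^d` to height 1 in `ℤ^(d+1)`. -/
def liftZ {d : ℕ} (v : Fin d → ℤ) : Fin (d + 1) → ℤ := Fin.snoc v 1

open Finset PowerSeries Matrix


lemma adt_succ (n h : ℕ) : Finset.Nat.antidiagonalTuple (n+1) h =
    (Finset.HasAntidiagonal.antidiagonal h).biUnion
      (fun p => (Finset.Nat.antidiagonalTuple n p.2).image (Fin.cons p.1)) := by
  ext x
  simp only [Finset.Nat.mem_antidiagonalTuple, Finset.mem_biUnion, Finset.mem_image,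
    Finset.HasAntidiagonal.mem_antidiagonal, Prod.exists]
  constructor
  · intro hx
    exact ⟨x 0, ∑ i, Fin.tail x i, by rw [← hx, Fin.sum_univ_succ]; rfl,
      Fin.tail x, rfl, Fin.cons_self_tail x⟩
  · rintro ⟨a, k, hak, y, hy, rfl⟩
    rw [Fin.sum_univ_succ]
    simp only [Fin.cons_zero, Fin.cons_succ]
    rw [hy]; exact hak

lemma adt_card_succ (n h : ℕ) : (Finset.Nat.antidiagonalTuple (n+1) h).card =
    ∑ p ∈ Finset.HasAntidiagonal.antidiagonal h, (Finset.Nat.antidiagonalTuple n p.2).card := by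
  rw [adt_succ, Finset.card_biUnion]
  · refine Finset.sum_congr rfl fun p _ => ?_
    refine Finset.card_image_of_injective _ (fun a b hab => funext fun i => ?_)
    have := congrFun hab i.succ
    simpa using this
  · rintro p hp q hq hpq s hsp hsq x hx
    exfalso
    have h1 := hsp hx
    have h2 := hsq hx
    simp only [Finset.mem_image] at h1 h2
    obtain ⟨y, hy, rfl⟩ := h1
    obtain ⟨z, hz, hzy⟩ := h2
    apply hpq
    have hq1 : q.1 = p.1 := congrFun hzy 0
    have h3 : p.1 + p.2 = q.1 + q.2 := by
      rw [Finset.HasAntidiagonal.mem_antidiagonal.mp hp, Finset.HasAntidiagonal.mem_antidiagonal.mp hq]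
    have : p.2 = q.2 := by omega
    exact Prod.ext hq1.symm this

lemma mk_cnt_eq (n : ℕ) : (PowerSeries.mk fun h => ((Finset.Nat.antidiagonalTuple n h).card : ℚ)) =
    (PowerSeries.mk 1 : ℚ⟦X⟧) ^ n := by
  induction n with
  | zero =>
    ext h
    cases h with
    | zero => simp
    | succ h => simp
  | succ n ih =>
    ext h
    rw [pow_succ', coeff_mul]
    simp only [coeff_mk, adt_card_succ, Nat.cast_sum]
    refine Finset.sum_congr rfl fun p hp => ?_
    rw [← ih]
    simp

lemma mk_cnt_mul (n : ℕ) :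
    (PowerSeries.mk fun h => ((Finset.Nat.antidiagonalTuple n h).card : ℚ)) * (1 - X) ^ n = 1 := by
  rw [mk_cnt_eq, ← mul_pow, mk_one_mul_one_sub_eq_one, one_pow]



lemma sum_bump_smul {d n : ℕ} (v : Fin n → Fin d → ℤ) (b : Fin n → ℕ) (j : Fin n) :
    ∑ i, (((b i + if i = j then 1 else 0 : ℕ)) : ℤ) • v i
      = v j + ∑ i, (b i : ℤ) • v i := by
  have : ∀ i, (((b i + if i = j then 1 else 0 : ℕ)) : ℤ) • v i
      = (b i : ℤ) • v i + (if i = j then (1:ℤ) else 0) • v i := by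
    intro i
    push_cast
    rw [add_smul]
  rw [Finset.sum_congr rfl (fun i _ => this i), Finset.sum_add_distrib]
  have h2 : (∑ i, (if i = j then (1:ℤ) else 0) • v i) = v j := by
    simp [ite_smul, Finset.sum_ite_eq']
  rw [h2, add_comm]

lemma mem_iterSumset {d n : ℕ} (v : Fin n → Fin d → ℤ) (h : ℕ) (x : Fin d → ℤ) :
    x ∈ iterSumset (insert 0 (Set.range v)) h ↔
      ∃ b : Fin n → ℕ, (∑ i, b i) ≤ h ∧ x = ∑ i, (b i : ℤ) • v i := by
  induction h generalizing x with
  | zero =>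
    constructor
    · rintro rfl
      · exact ⟨0, by simp, by simp⟩
    · rintro ⟨b, hb, rfl⟩
      have hb0 : ∀ i, b i = 0 := by
        intro i
        have := Finset.single_le_sum (f := b) (fun i _ => Nat.zero_le _) (Finset.mem_univ i)
        omega
      have : (∑ i, ((b i : ℤ) • v i)) = 0 := by
        refine Finset.sum_eq_zero fun i _ => by rw [hb0 i]; simp
      simp only [iterSumset, Set.mem_singleton_iff]
      exact this
  | succ h ih =>
    constructor
    · rintro hx
      obtain ⟨a, ha, s, hs, rfl⟩ := Set.mem_add.mp hx
      obtain ⟨b, hb, rfl⟩ := (ih s).mp hs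
      rcases ha with rfl | ⟨j, rfl⟩
      · exact ⟨b, by omega, by simp⟩
      · refine ⟨fun i => b i + if i = j then 1 else 0, ?_, ?_⟩
        · rw [Finset.sum_add_distrib, Finset.sum_ite_eq' Finset.univ j]
          simp only [Finset.mem_univ, if_true]
          omega
        · rw [sum_bump_smul]
    · rintro ⟨b, hb, rfl⟩
      by_cases hbh : ∑ i, b i ≤ h
      · have hs := (ih _).mpr ⟨b, hbh, rfl⟩
        have : (0 : Fin d → ℤ) ∈ insert 0 (Set.range v) := Set.mem_insert _ _
        exact Set.mem_add.mpr ⟨0, this, _, hs, by simp⟩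
      · have hsum : ∑ i, b i = h + 1 := by omega
        have hex : ∃ j, b j ≠ 0 := by
          by_contra hc
          push_neg at hc
          simp only [Finset.sum_congr rfl (fun i _ => hc i), Finset.sum_const_zero] at hsum
          omega
        obtain ⟨j, hj⟩ := hex
        set b' : Fin n → ℕ := fun i => b i - if i = j then 1 else 0 with hb'
        have hbeq : ∀ i, b i = b' i + if i = j then 1 else 0 := by
          intro i
          simp only [hb']
          split <;> rename_i hij
          · subst hij; omega
          · omega
        have hsum' : ∑ i, b' i = h := by
          have h1 : ∑ i, b i = ∑ i, b' i + 1 := by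
            rw [Finset.sum_congr rfl (fun i _ => hbeq i), Finset.sum_add_distrib,
              Finset.sum_ite_eq' Finset.univ j]
            simp
          omega
        have hs := (ih _).mpr ⟨b', le_of_eq hsum', rfl⟩
        refine Set.mem_add.mpr ⟨v j, Set.mem_insert_iff.mpr (Or.inr ⟨j, rfl⟩), _, hs, ?_⟩
        calc v j + ∑ i, (b' i : ℤ) • v i
            = ∑ i, (((b' i + if i = j then 1 else 0 : ℕ)) : ℤ) • v i :=
              (sum_bump_smul v b' j).symm
          _ = ∑ i, (b i : ℤ) • v i := by
              refine Finset.sum_congr rfl fun i _ => ?_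
              rw [← hbeq i]


lemma index_span_eq_natAbs_det (m : ℕ) (w : Fin m → (Fin m → ℤ))
    (hli : LinearIndependent ℤ w) :
    (Submodule.span ℤ (Set.range w)).toAddSubgroup.index
      = (Matrix.of fun i j => w j i).det.natAbs := by
  classical
  set W : Matrix (Fin m) (Fin m) ℤ := Matrix.of fun i j => w j i with hW
  have hWt : Wᵀ = w := by ext j i; rfl
  set L : Submodule ℤ (Fin m → ℤ) := Submodule.span ℤ (Set.range w) with hL
  let b0 : Module.Basis (Fin m) ℤ (Fin m → ℤ) := Pi.basisFun ℤ (Fin m)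
  obtain ⟨n, snf⟩ := L.smithNormalForm b0
  obtain ⟨bM, bN, f, a, ha⟩ := snf
  let bW : Module.Basis (Fin m) ℤ L := Module.Basis.span hli
  have hnm : m = n := by
    have e := bN.indexEquiv bW
    simpa using (Fintype.card_congr e).symm
  subst hnm
  -- index side
  have hindex : L.toAddSubgroup.index = ∏ i, (a i).natAbs := by
    have := Module.Basis.SmithNormalForm.toAddSubgroup_index_eq_ite (N := L) ⟨bM, bN, f, a, ha⟩
    simp only [Fintype.card_fin, if_pos rfl] at this
    rw [this]
    refine Finset.prod_congr rfl fun i _ => ?_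
    rw [Ideal.span_singleton_toAddSubgroup_eq_zmultiples, Int.index_zmultiples]
  -- determinant side
  have hfbij : Function.Bijective f := Finite.injective_iff_bijective.mp f.injective
  let feq := Equiv.ofBijective f hfbij
  let E : (Fin m → ℤ) ≃ₗ[ℤ] L := bM.equiv bN feq.symm
  let F2 : (Fin m → ℤ) →ₗ[ℤ] (Fin m → ℤ) := L.subtype ∘ₗ (E : (Fin m → ℤ) →ₗ[ℤ] L)
  have hF2apply : ∀ i, F2 (bM i) = a (feq.symm i) • bM i := by
    intro i
    have h1 : E (bM i) = bN (feq.symm i) := bM.equiv_apply i bN feq.symm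
    have : F2 (bM i) = (bN (feq.symm i) : Fin m → ℤ) := by
      simp only [F2, LinearMap.comp_apply, LinearEquiv.coe_coe, h1, Submodule.coe_subtype]
    rw [this, ha (feq.symm i)]
    exact congrArg (fun t => a (feq.symm i) • bM t) (feq.apply_symm_apply i)
  have hdetF2 : LinearMap.det F2 = ∏ i, a (feq.symm i) := by
    rw [← LinearMap.det_toMatrix bM]
    have : LinearMap.toMatrix bM bM F2 = Matrix.diagonal (fun i => a (feq.symm i)) := by
      ext i j
      rw [LinearMap.toMatrix_apply, hF2apply j, LinearEquiv.map_smul, Module.Basis.repr_self]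
      by_cases h : i = j
      · subst h; simp
      · simp [Matrix.diagonal_apply_ne _ h, Finsupp.single_eq_of_ne (Ne.symm h), h]
    rw [this, Matrix.det_diagonal]
  -- F1
  let F1 : (Fin m → ℤ) →ₗ[ℤ] (Fin m → ℤ) := Matrix.toLin' W
  have hrange1 : LinearMap.range F1 = L := by
    rw [show F1 = Matrix.toLin' W from rfl, Matrix.range_toLin', show W.col = w from hWt]
  have hinj1 : Function.Injective F1 := by
    have : (F1 : (Fin m → ℤ) → (Fin m → ℤ)) = W.mulVec := by
      funext x; exact Matrix.toLin'_apply W x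
    rw [show (⇑F1) = W.mulVec from this, Matrix.mulVec_injective_iff, show W.col = w from hWt]
    exact hli
  have hdetF1 : LinearMap.det F1 = W.det := LinearMap.det_toLin' W
  -- associated
  let E1 : (Fin m → ℤ) ≃ₗ[ℤ] L :=
    (LinearEquiv.ofInjective F1 hinj1).trans (LinearEquiv.ofEq _ _ hrange1)
  let ee : (Fin m → ℤ) ≃ₗ[ℤ] (Fin m → ℤ) := E1.trans E.symm
  have hcomp : ∀ x, F1 x = F2 (ee x) := by
    intro x
    show F1 x = L.subtype (E (E.symm (E1 x)))
    rw [LinearEquiv.apply_symm_apply]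
    show F1 x = (E1 x : Fin m → ℤ)
    rfl
  have hassoc : Associated (LinearMap.det F1) (LinearMap.det F2) :=
    LinearMap.associated_det_of_eq_comp ee _ _ hcomp
  have hnatabs : W.det.natAbs = (∏ i, a (feq.symm i)).natAbs := by
    rw [← hdetF1, ← hdetF2]
    exact Int.natAbs_eq_iff_associated.mpr hassoc
  rw [hindex, hnatabs]
  rw [show (∏ i, a (feq.symm i)).natAbs = ∏ i, (a (feq.symm i)).natAbs from
    map_prod Int.natAbsHom _ Finset.univ]
  exact (Equiv.prod_comp feq.symm fun i => (a i).natAbs).symm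

lemma key_dvd (m : ℕ) (w : Fin m → (Fin m → ℤ)) (eV : Fin m → ℤ)
    (hli : LinearIndependent ℤ w)
    (hgen' : Submodule.span ℤ (insert eV (Set.range w)) = (⊤ : Submodule ℤ (Fin m → ℤ)))
    (D : ℕ) (hD : (D : ℤ) = |(Matrix.of fun i j => w j i).det|) (k : ℤ)
    (hk : k • eV ∈ Submodule.span ℤ (Set.range w)) : (D : ℤ) ∣ k := by
  classical
  set L : Submodule ℤ (Fin m → ℤ) := Submodule.span ℤ (Set.range w) with hL
  set H : AddSubgroup (Fin m → ℤ) := L.toAddSubgroup with hH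
  let mk : (Fin m → ℤ) →+ (Fin m → ℤ) ⧸ H := QuotientAddGroup.mk' H
  have hmk0 : ∀ z, z ∈ L → mk z = 0 := fun z hz =>
    (QuotientAddGroup.eq_zero_iff z).mpr hz
  have hsurj : Function.Surjective mk := QuotientAddGroup.mk'_surjective H
  -- every element is a multiple of mk eV
  have htop : ∀ q : (Fin m → ℤ) ⧸ H, ∃ n : ℤ, n • (mk eV) = q := by
    intro q
    obtain ⟨x, rfl⟩ := hsurj q
    have hx : x ∈ Submodule.span ℤ (insert eV (Set.range w)) := by rw [hgen']; trivial
    rw [Submodule.span_insert] at hx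
    obtain ⟨y, hy, z, hz, rfl⟩ := Submodule.mem_sup.mp hx
    obtain ⟨n, rfl⟩ := Submodule.mem_span_singleton.mp hy
    refine ⟨n, ?_⟩
    rw [map_add, hmk0 z hz, add_zero, ← map_zsmul]
  have hmult : AddSubgroup.zmultiples (mk eV) = ⊤ := by
    rw [AddSubgroup.eq_top_iff']
    intro q
    obtain ⟨n, hn⟩ := htop q
    exact ⟨n, hn⟩
  have hord : addOrderOf (mk eV) = H.index := by
    rw [← Nat.card_zmultiples (mk eV), hmult]
    rw [AddSubgroup.index]
    exact Nat.card_congr AddSubgroup.topEquiv.toEquiv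
  have hDnat : D = (Matrix.of fun i j => w j i).det.natAbs := by
    have := hD
    rw [Int.abs_eq_natAbs] at this
    exact_mod_cast this
  have hindex : H.index = D := by
    rw [hH, index_span_eq_natAbs_det m w hli, hDnat]
  have hzero : k • (mk eV) = 0 := by
    rw [← map_zsmul, hmk0 _ hk]
  have := addOrderOf_dvd_iff_zsmul_eq_zero.mpr hzero
  rw [hord, hindex] at this
  exact this


section Geom

variable {d : ℕ} (v : Fin (d + 1) → Fin d → ℤ)

local notation "M" => Matrix.of fun r c => liftZ (v c) r
local notation "Mr" => Matrix.of fun r c => ((liftZ (v c) r : ℤ) : ℝ)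

lemma liftZ_castSucc (u : Fin d → ℤ) (j : Fin d) : liftZ u (Fin.castSucc j) = u j :=
  Fin.snoc_castSucc ..

lemma liftZ_last (u : Fin d → ℤ) : liftZ u (Fin.last d) = 1 := Fin.snoc_last (α := fun _ => ℤ) ..

lemma real_ker (haff : AffineIndependent ℝ (fun i (j : Fin d) => (v i j : ℝ)))
    (x : Fin (d + 1) → ℝ) (hx1 : ∀ j : Fin d, ∑ i, x i * (v i j : ℝ) = 0)
    (hx2 : ∑ i, x i = 0) : x = 0 := by
  classical
  set l := Fin.last d
  set vr : Fin (d + 1) → (Fin d → ℝ) := fun i j => (v i j : ℝ) with hvr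
  have li := (affineIndependent_iff_linearIndependent_vsub ℝ vr l).mp haff
  have hvec : ∑ i, x i • vr i = 0 := by
    funext j
    rw [Finset.sum_apply]
    simpa using hx1 j
  have herase_sum : ∑ i ∈ Finset.univ.erase l, x i = -(x l) := by
    have := Finset.sum_erase_add Finset.univ x (Finset.mem_univ l)
    linarith [hx2, this]
  have herase_vec : ∑ i ∈ Finset.univ.erase l, x i • vr i = -(x l • vr l) := by
    have h := Finset.sum_erase_add Finset.univ (fun i => x i • vr i) (Finset.mem_univ l)
    rw [hvec] at h
    linear_combination (norm := module) h
  have hsub : ∑ i : {y : Fin (d+1) // y ≠ l}, x i • (vr i -ᵥ vr l) = 0 := by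
    rw [← Finset.sum_subtype (Finset.univ.erase l)
      (fun i => by simp [Finset.mem_erase]) (fun i => x i • (vr i -ᵥ vr l))]
    have : ∀ i ∈ Finset.univ.erase l, x i • (vr i -ᵥ vr l) = x i • vr i - x i • vr l := by
      intro i _
      rw [vsub_eq_sub, smul_sub]
    rw [Finset.sum_congr rfl this, Finset.sum_sub_distrib, herase_vec, ← Finset.sum_smul,
      herase_sum]
    module
  have hg := Fintype.linearIndependent_iff.mp li (fun i => x i) hsub
  funext i
  by_cases hi : i = l
  · subst hi
    have : ∑ j ∈ Finset.univ.erase l, x j = 0 := by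
      refine Finset.sum_eq_zero fun j hj => ?_
      exact hg ⟨j, (Finset.mem_erase.mp hj).1⟩
    rw [this] at herase_sum
    simpa using herase_sum.symm
  · exact hg ⟨i, hi⟩

lemma sum_smul_eq_mulVec (y : Fin (d + 1) → ℤ) :
    (M).mulVec y = ∑ i, y i • liftZ (v i) := by
  funext r
  rw [Matrix.mulVec, dotProduct, Finset.sum_apply]
  exact Finset.sum_congr rfl fun i _ => by
    simp [Matrix.of_apply, mul_comm]

lemma mulVec_real_ker (haff : AffineIndependent ℝ (fun i (j : Fin d) => (v i j : ℝ)))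
    (x : Fin (d + 1) → ℝ) (hx : (Mr).mulVec x = 0) : x = 0 := by
  apply real_ker v haff
  · intro j
    have := congrFun hx (Fin.castSucc j)
    rw [Matrix.mulVec, dotProduct] at this
    simpa [liftZ_castSucc, mul_comm] using this
  · have := congrFun hx (Fin.last d)
    rw [Matrix.mulVec, dotProduct] at this
    simpa [liftZ_last] using this

lemma cast_det : ((M).det : ℝ) = (Mr).det := by
  rw [show (Mr) = (M).map (Int.cast : ℤ → ℝ) from rfl]
  exact (RingHom.map_det (Int.castRingHom ℝ) (M)).symm ▸ rfl

lemma det_ne_zero (haff : AffineIndependent ℝ (fun i (j : Fin d) => (v i j : ℝ))) :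
    (M).det ≠ 0 := by
  intro h0
  have hr : (Mr).det = 0 := by
    rw [← cast_det]
    exact_mod_cast congrArg (fun z : ℤ => (z : ℝ)) h0
  obtain ⟨x, hx0, hx⟩ := (Matrix.exists_mulVec_eq_zero_iff).mpr hr
  exact hx0 (mulVec_real_ker v haff x hx)

lemma int_ker (haff : AffineIndependent ℝ (fun i (j : Fin d) => (v i j : ℝ)))
    (y : Fin (d + 1) → ℤ) (hy : (M).mulVec y = 0) : y = 0 := by
  have h1 : (M).adjugate.mulVec ((M).mulVec y) = 0 := by rw [hy, Matrix.mulVec_zero]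
  rw [Matrix.mulVec_mulVec, Matrix.adjugate_mul, Matrix.smul_mulVec,
    Matrix.one_mulVec] at h1
  funext i
  have := congrFun h1 i
  rw [Pi.smul_apply, smul_eq_mul] at this
  have hd := det_ne_zero v haff
  simpa [hd] using (mul_eq_zero.mp this).resolve_left hd

lemma w_linearIndependent (haff : AffineIndependent ℝ (fun i (j : Fin d) => (v i j : ℝ))) :
    LinearIndependent ℤ (fun i => liftZ (v i)) := by
  have hinj : Function.Injective (M).mulVec := by
    intro a b hab
    have : (M).mulVec (a - b) = 0 := by
      rw [Matrix.mulVec_sub, hab, sub_self]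
    have h2 := int_ker v haff _ this
    funext i
    have h3 := congrFun h2 i
    simp only [Pi.sub_apply, Pi.zero_apply, sub_eq_zero] at h3
    exact h3
  exact Matrix.mulVec_injective_iff.mp hinj


lemma cast_mulVec (y : Fin (d + 1) → ℤ) :
    (fun r => ((((M).mulVec y) r : ℤ) : ℝ)) = (Mr).mulVec (fun i => ((y i : ℤ) : ℝ)) := by
  funext r
  rw [Matrix.mulVec, dotProduct, Matrix.mulVec, dotProduct]
  push_cast
  rfl

lemma exists_c (haff : AffineIndependent ℝ (fun i (j : Fin d) => (v i j : ℝ)))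
    (h0hull : (0 : Fin d → ℝ) ∈
      convexHull ℝ (Set.range (fun i (j : Fin d) => (v i j : ℝ))))
    (D : ℕ) (hD : (D : ℤ) = |(M).det|) :
    ∃ c : Fin (d + 1) → ℕ, (∑ i, (c i : ℤ)) = (D : ℤ) ∧
      (M).mulVec (fun i => (c i : ℤ)) = (D : ℤ) • liftZ (0 : Fin d → ℤ) := by
  classical
  set vr : Fin (d + 1) → (Fin d → ℝ) := fun i j => (v i j : ℝ) with hvr
  rw [convexHull_range_eq_exists_affineCombination] at h0hull
  obtain ⟨s, wght, hw0, hw1, hcomb⟩ := h0hull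
  rw [Finset.affineCombination_eq_linear_combination s vr wght hw1] at hcomb
  set lam : Fin (d + 1) → ℝ := fun i => if i ∈ s then wght i else 0 with hlam
  have hlam0 : ∀ i, 0 ≤ lam i := by
    intro i
    simp only [hlam]
    split <;> rename_i hi
    · exact hw0 i hi
    · exact le_refl 0
  have hlam1 : ∑ i, lam i = 1 := by
    rw [hlam]
    simp only [Finset.sum_ite_mem, Finset.univ_inter]
    exact hw1
  have hlamvec : ∑ i, lam i • vr i = 0 := by
    have : ∀ i, lam i • vr i = if i ∈ s then wght i • vr i else 0 := by
      intro i
      simp only [hlam]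
      split <;> simp
    rw [Finset.sum_congr rfl fun i _ => this i]
    simp only [Finset.sum_ite_mem, Finset.univ_inter]
    exact hcomb
  set eV : Fin (d + 1) → ℤ := liftZ (0 : Fin d → ℤ) with heV
  set er : Fin (d + 1) → ℝ := fun r => ((eV r : ℤ) : ℝ) with her
  have hMrlam : (Mr).mulVec lam = er := by
    funext r
    rw [Matrix.mulVec, dotProduct]
    refine Fin.lastCases ?_ ?_ r
    · simp only [her, heV, liftZ_last]
      push_cast
      calc ∑ c, ((liftZ (v c) (Fin.last d) : ℤ) : ℝ) * lam c
          = ∑ c, lam c := by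
            refine Finset.sum_congr rfl fun c _ => ?_
            rw [liftZ_last]
            push_cast
            ring
        _ = 1 := hlam1
    · intro j
      have h1 : ∀ c, ((liftZ (v c) (Fin.castSucc j) : ℤ) : ℝ) * lam c
          = lam c * vr c j := by
        intro c
        rw [liftZ_castSucc]
        simp [hvr, mul_comm]
      simp only [Matrix.of_apply]
      rw [Finset.sum_congr rfl fun c _ => h1 c]
      have h2 := congrFun hlamvec j
      rw [Finset.sum_apply] at h2
      simp only [Pi.smul_apply, smul_eq_mul] at h2
      rw [h2]
      simp [her, heV, liftZ_castSucc]
  set eps : ℤ := if 0 ≤ (M).det then 1 else -1 with heps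
  have hepsdet : eps * (M).det = (D : ℤ) := by
    rw [hD, heps]
    split <;> rename_i hc
    · rw [abs_of_nonneg hc]; ring
    · rw [abs_of_neg (lt_of_not_ge hc)]; ring
  set cInt : Fin (d + 1) → ℤ := eps • ((M).adjugate.mulVec eV) with hcInt
  have hMc : (M).mulVec cInt = (D : ℤ) • eV := by
    rw [hcInt, Matrix.mulVec_smul, Matrix.mulVec_mulVec, Matrix.mul_adjugate,
      Matrix.smul_mulVec, Matrix.one_mulVec, smul_smul, hepsdet]
  have hcast : (Mr).mulVec (fun i => ((cInt i : ℤ) : ℝ)) = (D : ℝ) • er := by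
    rw [← cast_mulVec v cInt]
    funext r
    rw [hMc]
    simp [her]
  have hreal : (fun i => ((cInt i : ℤ) : ℝ)) = (D : ℝ) • lam := by
    have hdiff : (Mr).mulVec ((fun i => ((cInt i : ℤ) : ℝ)) - (D : ℝ) • lam) = 0 := by
      rw [Matrix.mulVec_sub, hcast, Matrix.mulVec_smul, hMrlam, sub_self]
    have := mulVec_real_ker v haff _ hdiff
    funext i
    have h3 := congrFun this i
    simp only [Pi.sub_apply, Pi.zero_apply, sub_eq_zero] at h3
    exact h3
  have hnonneg : ∀ i, 0 ≤ cInt i := by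
    intro i
    have h4 := congrFun hreal i
    have : (0 : ℝ) ≤ (D : ℝ) * lam i :=
      mul_nonneg (by positivity) (hlam0 i)
    rw [Pi.smul_apply, smul_eq_mul] at h4
    exact_mod_cast h4 ▸ this
  have hsum : ∑ i, cInt i = (D : ℤ) := by
    have h5 := congrFun hMc (Fin.last d)
    rw [Matrix.mulVec, dotProduct] at h5
    have h6 : ∀ c, (M) (Fin.last d) c * cInt c = cInt c := by
      intro c
      show liftZ (v c) (Fin.last d) * cInt c = cInt c
      rw [liftZ_last]; ring
    rw [Finset.sum_congr rfl fun c _ => h6 c] at h5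
    rw [h5]
    simp [heV, liftZ_last]
  refine ⟨fun i => (cInt i).toNat, ?_, ?_⟩
  · rw [Finset.sum_congr rfl fun i _ => Int.toNat_of_nonneg (hnonneg i)]
    exact hsum
  · have : (fun i => (((cInt i).toNat : ℤ))) = cInt := by
      funext i
      exact Int.toNat_of_nonneg (hnonneg i)
    rw [this]
    exact hMc

end Geom

section Count

variable {d : ℕ} (v : Fin (d + 1) → Fin d → ℤ)

local notation "M" => Matrix.of fun r c => liftZ (v c) r

lemma counting (D : ℕ) (hD0 : 0 < D)
    (hker : ∀ y : Fin (d + 1) → ℤ, (M).mulVec y = 0 → y = 0)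
    (hdvd : ∀ (k : ℤ) (y : Fin (d + 1) → ℤ),
      (M).mulVec y = k • liftZ (0 : Fin d → ℤ) → (D : ℤ) ∣ k)
    (c : Fin (d + 1) → ℕ) (hc1 : (∑ i, (c i : ℤ)) = (D : ℤ))
    (hc2 : (M).mulVec (fun i => (c i : ℤ)) = (D : ℤ) • liftZ (0 : Fin d → ℤ))
    (h : ℕ) :
    ((iterSumset (insert 0 (Set.range v)) h).ncard : ℚ) =
      ∑ p ∈ Finset.HasAntidiagonal.antidiagonal h,
        (if p.1 < D then ((Finset.Nat.antidiagonalTuple (d + 1) p.2).card : ℚ) else 0) := by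
  classical
  set f : (Fin (d + 1) → ℕ) → (Fin d → ℤ) := fun b => ∑ i, (b i : ℤ) • v i with hf
  set Bfin : Finset (Fin (d + 1) → ℕ) := (Finset.HasAntidiagonal.antidiagonal h).biUnion
    (fun p => if p.1 < D then Finset.Nat.antidiagonalTuple (d + 1) p.2 else ∅) with hBfin
  -- sum of c over ℕ
  have hcsum : ∑ i, c i = D := by exact_mod_cast hc1
  -- f c = 0
  have hfc : (∑ i, (c i : ℤ) • v i) = 0 := by
    funext j
    have h1 := congrFun hc2 (Fin.castSucc j)
    rw [Matrix.mulVec, dotProduct] at h1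
    simp only [Matrix.of_apply] at h1
    have h2 : ∀ i, liftZ (v i) (Fin.castSucc j) * (c i : ℤ) = (c i : ℤ) * v i j := by
      intro i
      unfold liftZ
      rw [Fin.snoc_castSucc]
      ring
    rw [Finset.sum_congr rfl fun i _ => h2 i] at h1
    have h3 : ((D : ℤ) • liftZ (0 : Fin d → ℤ)) (Fin.castSucc j) = 0 := by
      unfold liftZ
      simp [Fin.snoc_castSucc]
    rw [h3] at h1
    rw [Finset.sum_apply]
    simpa using h1
  -- lifted difference identity
  have hlift : ∀ b b' : Fin (d + 1) → ℕ, f b = f b' →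
      (M).mulVec (fun i => (b i : ℤ) - (b' i : ℤ))
        = ((∑ i, b i : ℕ) - (∑ i, b' i : ℕ) : ℤ) • liftZ (0 : Fin d → ℤ) := by
    intro b b' hbb
    funext r
    rw [Matrix.mulVec, dotProduct]
    simp only [Matrix.of_apply]
    refine Fin.lastCases ?_ ?_ r
    · have : ∀ i, liftZ (v i) (Fin.last d) * ((b i : ℤ) - (b' i : ℤ))
          = (b i : ℤ) - (b' i : ℤ) := by
        intro i; unfold liftZ; rw [Fin.snoc_last]; ring
      rw [Finset.sum_congr rfl fun i _ => this i]
      unfold liftZ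
      simp only [Pi.smul_apply, Fin.snoc_last, smul_eq_mul, mul_one]
      push_cast
      rw [Finset.sum_sub_distrib]
    · intro j
      have : ∀ i, liftZ (v i) (Fin.castSucc j) * ((b i : ℤ) - (b' i : ℤ))
          = (b i : ℤ) • v i j - (b' i : ℤ) • v i j := by
        intro i; unfold liftZ; rw [Fin.snoc_castSucc]; simp only [smul_eq_mul]; push_cast; ring
      rw [Finset.sum_congr rfl fun i _ => this i, Finset.sum_sub_distrib]
      have hb := congrFun hbb j
      simp only [hf, Finset.sum_apply, Pi.smul_apply, smul_eq_mul] at hb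
      simp only [smul_eq_mul]
      rw [hb]
      unfold liftZ
      simp [Fin.snoc_castSucc]
  -- description of Bfin membership
  have hmem : ∀ b : Fin (d + 1) → ℕ, b ∈ Bfin ↔ ∃ r : ℕ, r < D ∧ r + ∑ i, b i = h := by
    intro b
    rw [hBfin, Finset.mem_biUnion]
    constructor
    · rintro ⟨p, hp, hb⟩
      by_cases hpD : p.1 < D
      · rw [if_pos hpD] at hb
        have := Finset.Nat.mem_antidiagonalTuple.mp hb
        exact ⟨p.1, hpD, by rw [this]; exact Finset.HasAntidiagonal.mem_antidiagonal.mp hp⟩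
      · rw [if_neg hpD] at hb
        exact absurd hb (Finset.notMem_empty b)
    · rintro ⟨r, hrD, hrh⟩
      exact ⟨(r, ∑ i, b i), Finset.HasAntidiagonal.mem_antidiagonal.mpr hrh,
        by rw [if_pos hrD]; exact Finset.Nat.mem_antidiagonalTuple.mpr rfl⟩
  -- the set equality
  have hset : iterSumset (insert 0 (Set.range v)) h = ↑(Bfin.image f) := by
    ext x
    rw [mem_iterSumset]
    simp only [Finset.coe_image, Set.mem_image, Finset.mem_coe]
    constructor
    · rintro ⟨b0, hb0, rfl⟩
      obtain ⟨a0, ha0⟩ := Nat.le.dest hb0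
      set q := a0 / D with hq
      set r := a0 % D with hr
      set b : Fin (d + 1) → ℕ := fun i => b0 i + q * c i with hb
      have hsumb : ∑ i, b i = ∑ i, b0 i + q * D := by
        rw [hb, Finset.sum_add_distrib, ← Finset.mul_sum, hcsum]
      refine ⟨b, ?_, ?_⟩
      · rw [hmem b]
        refine ⟨r, Nat.mod_lt _ hD0, ?_⟩
        rw [hsumb]
        have hqr : D * q + r = a0 := Nat.div_add_mod a0 D
        have hcm : q * D = D * q := Nat.mul_comm q D
        omega
      · show f b = f b0
        have hterm : ∀ i, ((b i : ℕ) : ℤ) • v i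
            = (b0 i : ℤ) • v i + (q : ℤ) • ((c i : ℤ) • v i) := by
          intro i
          simp only [hb]
          push_cast
          rw [add_smul, smul_smul]
        calc f b = ∑ i, ((b i : ℕ) : ℤ) • v i := rfl
          _ = ∑ i, ((b0 i : ℤ) • v i + (q : ℤ) • ((c i : ℤ) • v i)) :=
              Finset.sum_congr rfl fun i _ => hterm i
          _ = (∑ i, (b0 i : ℤ) • v i) + (q : ℤ) • (∑ i, (c i : ℤ) • v i) := by
              rw [Finset.sum_add_distrib, Finset.smul_sum]
          _ = f b0 := by rw [hfc, smul_zero, add_zero]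
    · rintro ⟨b, hb, rfl⟩
      obtain ⟨r, hrD, hrh⟩ := (hmem b).mp hb
      exact ⟨b, by omega, rfl⟩
  -- injectivity on Bfin
  have hinj : Set.InjOn f ↑Bfin := by
    intro b hb b' hb' hfbb
    obtain ⟨r, hrD, hrh⟩ := (hmem b).mp (Finset.mem_coe.mp hb)
    obtain ⟨r', hrD', hrh'⟩ := (hmem b').mp (Finset.mem_coe.mp hb')
    have hdiff := hlift b b' hfbb
    have hdvd' := hdvd _ _ hdiff
    have hsums : ∑ i, b i = ∑ i, b' i := by
      have habs : ((∑ i, b i : ℕ) : ℤ) - ((∑ i, b' i : ℕ) : ℤ) = (r' : ℤ) - r := by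
        omega
      rw [habs] at hdvd'
      have hD0' : (0:ℤ) < D := by exact_mod_cast hD0
      have hb1 : (r':ℤ) - r < D := by omega
      have hb2 : -(D:ℤ) < (r':ℤ) - r := by omega
      obtain ⟨t, ht⟩ := hdvd'
      rw [ht] at hb1 hb2
      have ht0 : t = 0 := by
        by_contra h0
        rcases lt_or_gt_of_ne h0 with hneg | hpos
        · have h8 : (D:ℤ) * t ≤ (D:ℤ) * (-1) := mul_le_mul_of_nonneg_left (by omega) hD0'.le
          linarith
        · have h8 : (D:ℤ) * 1 ≤ (D:ℤ) * t := mul_le_mul_of_nonneg_left (by omega) hD0'.le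
          linarith
      rw [ht0, mul_zero] at ht
      omega
    have hzero : (M).mulVec (fun i => (b i : ℤ) - (b' i : ℤ)) = 0 := by
      rw [hdiff, hsums]
      simp
    have := hker _ hzero
    funext i
    have h7 := congrFun this i
    simp only [Pi.zero_apply, sub_eq_zero] at h7
    exact_mod_cast h7
  -- count
  rw [hset, Set.ncard_coe_finset, Finset.card_image_of_injOn hinj, hBfin,
    Finset.card_biUnion]
  · push_cast
    refine Finset.sum_congr rfl fun p _ => ?_
    by_cases hpD : p.1 < D
    · rw [if_pos hpD, if_pos hpD]
    · rw [if_neg hpD, if_neg hpD]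
      simp
  · rintro p hp q hq hpq s hsp hsq x hx
    exfalso
    have h1 := hsp hx
    have h2 := hsq hx
    beta_reduce at h1 h2
    by_cases hpD : p.1 < D
    · by_cases hqD : q.1 < D
      · rw [if_pos hpD] at h1
        rw [if_pos hqD] at h2
        have e1 := Finset.Nat.mem_antidiagonalTuple.mp h1
        have e2 := Finset.Nat.mem_antidiagonalTuple.mp h2
        apply hpq
        have := Finset.HasAntidiagonal.mem_antidiagonal.mp hp
        have := Finset.HasAntidiagonal.mem_antidiagonal.mp hq
        have : p.2 = q.2 := by omega
        exact Prod.ext (by omega) this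
      · rw [if_neg hqD] at h2
        exact Finset.notMem_empty x h2
    · rw [if_neg hpD] at h1
      exact Finset.notMem_empty x h1

end Count


theorem generating_series_dplus2_simplex (d : ℕ) (hd : 1 ≤ d)
    (v : Fin (d + 1) → Fin d → ℤ)
    (haff : AffineIndependent ℝ (fun i (j : Fin d) => (v i j : ℝ)))
    (h0hull : (0 : Fin d → ℝ) ∈
      convexHull ℝ (Set.range (fun i (j : Fin d) => (v i j : ℝ))))
    (h0nv : (0 : Fin d → ℤ) ∉ Set.range v)
    (hgen : AddSubgroup.closure (insert 0 (Set.range v)) =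
      (⊤ : AddSubgroup (Fin d → ℤ)))
    (D : ℕ) (hD : (D : ℤ) = |(Matrix.of fun r c => liftZ (v c) r).det|) :
    (PowerSeries.mk fun h : ℕ =>
        ((iterSumset (insert 0 (Set.range v)) h).ncard : ℚ)) *
      (1 - PowerSeries.X) ^ (d + 2) = 1 - PowerSeries.X ^ D := by
  classical
  set w : Fin (d + 1) → (Fin (d + 1) → ℤ) := fun i => liftZ (v i) with hw
  set eV : Fin (d + 1) → ℤ := liftZ (0 : Fin d → ℤ) with heV
  have hdet : (Matrix.of fun r c => liftZ (v c) r).det ≠ 0 := det_ne_zero v haff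
  have hD0 : 0 < D := by
    rcases Nat.eq_zero_or_pos D with h0 | h0
    · exfalso; apply hdet; rw [h0] at hD; simpa using (abs_eq_zero.mp (by exact_mod_cast hD.symm))
    · exact h0
  have hli : LinearIndependent ℤ w := w_linearIndependent v haff
  -- span of insert is top
  set P : Submodule ℤ (Fin (d + 1) → ℤ) := Submodule.span ℤ (insert eV (Set.range w)) with hP
  have heVP : eV ∈ P := Submodule.subset_span (Set.mem_insert _ _)
  have hwP : ∀ i, w i ∈ P := fun i =>
    Submodule.subset_span (Set.mem_insert_of_mem _ ⟨i, rfl⟩)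
  have hsnoc0 : ∀ u : Fin d → ℤ, (Fin.snoc u 0 : Fin (d + 1) → ℤ) ∈ P := by
    intro u
    have hu : u ∈ AddSubgroup.closure (insert 0 (Set.range v)) := by rw [hgen]; trivial
    refine AddSubgroup.closure_induction
      (p := fun z _ => (Fin.snoc z 0 : Fin (d + 1) → ℤ) ∈ P) ?_ ?_ ?_ ?_ hu
    · rintro x (rfl | ⟨i, rfl⟩)
      · show (Fin.snoc (0 : Fin d → ℤ) 0 : Fin (d + 1) → ℤ) ∈ P
        have : (Fin.snoc (0 : Fin d → ℤ) 0 : Fin (d + 1) → ℤ) = 0 := by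
          funext r
          refine Fin.lastCases ?_ ?_ r <;> simp
        rw [this]; exact P.zero_mem
      · show (Fin.snoc (v i) 0 : Fin (d + 1) → ℤ) ∈ P
        have : (Fin.snoc (v i) 0 : Fin (d + 1) → ℤ) = w i - eV := by
          funext r
          refine Fin.lastCases ?_ ?_ r
          · simp [hw, heV, liftZ_last]
          · intro j; simp [hw, heV, liftZ_castSucc]
        rw [this]; exact P.sub_mem (hwP i) heVP
    · show (Fin.snoc (0 : Fin d → ℤ) 0 : Fin (d + 1) → ℤ) ∈ P
      have : (Fin.snoc (0 : Fin d → ℤ) 0 : Fin (d + 1) → ℤ) = 0 := by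
        funext r
        refine Fin.lastCases ?_ ?_ r <;> simp
      rw [this]; exact P.zero_mem
    · intro x y _ _ hx hy
      show (Fin.snoc (x + y) 0 : Fin (d + 1) → ℤ) ∈ P
      have : (Fin.snoc (x + y) 0 : Fin (d + 1) → ℤ) = Fin.snoc x 0 + Fin.snoc y 0 := by
        funext r
        refine Fin.lastCases ?_ ?_ r <;> simp
      rw [this]; exact P.add_mem hx hy
    · intro x _ hx
      show (Fin.snoc (-x) 0 : Fin (d + 1) → ℤ) ∈ P
      have : (Fin.snoc (-x) 0 : Fin (d + 1) → ℤ) = -(Fin.snoc x 0 : Fin (d + 1) → ℤ) := by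
        funext r
        refine Fin.lastCases ?_ ?_ r <;> simp
      rw [this]; exact P.neg_mem hx
  have hgen' : Submodule.span ℤ (insert eV (Set.range w)) = (⊤ : Submodule ℤ (Fin (d+1) → ℤ)) := by
    rw [← hP, Submodule.eq_top_iff']
    intro x
    have hx1 := hsnoc0 (fun j => x (Fin.castSucc j))
    have hx2 : x = (Fin.snoc (fun j => x (Fin.castSucc j)) 0 : Fin (d + 1) → ℤ)
        + x (Fin.last d) • eV := by
      funext r
      refine Fin.lastCases ?_ ?_ r
      · simp [heV, liftZ_last]
      · intro j; simp [heV, liftZ_castSucc]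
    rw [hx2]
    exact P.add_mem hx1 (P.smul_mem _ heVP)
  -- divisibility
  have hdvd : ∀ (k : ℤ) (y : Fin (d + 1) → ℤ),
      (Matrix.of fun r c => liftZ (v c) r).mulVec y = k • eV → (D : ℤ) ∣ k := by
    intro k y hy
    refine key_dvd (d + 1) w eV hli hgen' D ?_ k ?_
    · exact hD
    · rw [← hy, sum_smul_eq_mulVec v y]
      exact Submodule.sum_mem _ fun i _ =>
        Submodule.smul_mem _ _ (Submodule.subset_span ⟨i, rfl⟩)
  have hker : ∀ y : Fin (d + 1) → ℤ,
      (Matrix.of fun r c => liftZ (v c) r).mulVec y = 0 → y = 0 := int_ker v haff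
  obtain ⟨c, hc1, hc2⟩ := exists_c v haff h0hull D hD
  -- coefficient identity
  have hcount := counting v D hD0 hker hdvd c hc1 hc2
  have hFeq : (PowerSeries.mk fun h : ℕ =>
        ((iterSumset (insert 0 (Set.range v)) h).ncard : ℚ))
      = (∑ a ∈ Finset.range D, (PowerSeries.X : ℚ⟦X⟧) ^ a) *
        (PowerSeries.mk fun h => ((Finset.Nat.antidiagonalTuple (d + 1) h).card : ℚ)) := by
    ext h
    rw [coeff_mk, hcount h, coeff_mul]
    refine Finset.sum_congr rfl fun p _ => ?_
    have hcoeff : (coeff (R := ℚ) p.1) (∑ a ∈ Finset.range D, (PowerSeries.X : ℚ⟦X⟧) ^ a)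
        = if p.1 < D then 1 else 0 := by
      rw [map_sum]
      simp_rw [coeff_X_pow]
      rw [Finset.sum_ite_eq (Finset.range D) p.1 (fun _ => (1:ℚ))]
      simp [Finset.mem_range]
    rw [hcoeff, coeff_mk]
    by_cases hpD : p.1 < D
    · rw [if_pos hpD, if_pos hpD, one_mul]
    · rw [if_neg hpD, if_neg hpD, zero_mul]
  rw [hFeq]
  have hgeom : (∑ a ∈ Finset.range D, (PowerSeries.X : ℚ⟦X⟧) ^ a) * (1 - PowerSeries.X)
      = 1 - PowerSeries.X ^ D := by
    have := geom_sum_mul (PowerSeries.X : ℚ⟦X⟧) D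
    linear_combination -this
  calc (∑ a ∈ Finset.range D, (PowerSeries.X : ℚ⟦X⟧) ^ a) *
        (PowerSeries.mk fun h => ((Finset.Nat.antidiagonalTuple (d + 1) h).card : ℚ)) *
        (1 - PowerSeries.X) ^ (d + 2)
      = ((∑ a ∈ Finset.range D, (PowerSeries.X : ℚ⟦X⟧) ^ a) * (1 - PowerSeries.X)) *
        ((PowerSeries.mk fun h => ((Finset.Nat.antidiagonalTuple (d + 1) h).card : ℚ)) *
          (1 - PowerSeries.X) ^ (d + 1)) := by
        rw [show d + 2 = (d + 1) + 1 from rfl, pow_succ]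
        ring
    _ = (1 - PowerSeries.X ^ D) * 1 := by rw [hgeom, mk_cnt_mul]
    _ = 1 - PowerSeries.X ^ D := mul_one _
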